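/- Let Y be a real Banach space such that the map y* ↦ ‖y*‖ is twice continuously (Fréchet) differentiable on Y* ∖ {0}, and let Z be a real Banach space. Suppose A : Y → Y and B : Z → Y are bounded linear operators and (y₀, y₀*) ∈ Π(Y) satisfy |y*(A y)| + ‖B* y*‖ ≤ |y₀*(A y₀)| + ‖B* y₀*‖ for all (y, y*) ∈ Π(Y). Then for every h* in the unit sphere of Y*, lim_{t→0} ( ‖B* y₀* + t B* h*‖ + ‖B* y₀* − t B* h*‖ − 2‖B* y₀*‖ ) / t = 0. -/

import Mathlib

open Filter Topology

open NormedSpace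

/-- Key quantitative Šmulyan estimate. -/
lemma smulyan_est {Y : Type*} [NormedAddCommGroup Y] [NormedSpace ℝ Y]
    {xs : Y →L[ℝ] ℝ} {d : (Y →L[ℝ] ℝ) →L[ℝ] ℝ}
    (hd : HasFDerivAt (fun f : Y →L[ℝ] ℝ => ‖f‖) d xs)
    {ε : ℝ} (hε : 0 < ε) :
    ∃ δ > 0, ∀ x : Y, ‖x‖ ≤ 1 → ‖xs‖ - xs x ≤ δ →
      ‖(inclusionInDoubleDualLi ℝ x : (Y →L[ℝ] ℝ) →L[ℝ] ℝ) - d‖ ≤ 4 * ε := by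
  have hlo := (hasFDerivAt_iff_isLittleO_nhds_zero.1 hd).def hε
  rw [Metric.eventually_nhds_iff] at hlo
  obtain ⟨r, hr, hball⟩ := hlo
  set ρ : ℝ := r / 2 with hρdef
  have hρ : 0 < ρ := by positivity
  refine ⟨ε * ρ, by positivity, fun x hx hδ => ?_⟩
  set T : (Y →L[ℝ] ℝ) →L[ℝ] ℝ :=
    (inclusionInDoubleDualLi ℝ x : (Y →L[ℝ] ℝ) →L[ℝ] ℝ) - d with hT
  -- one-sided bound on small vectors
  have key : ∀ y : Y →L[ℝ] ℝ, ‖y‖ ≤ ρ → T y ≤ ε * ρ + ε * ρ := by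
    intro y hy
    have hlt : dist y (0 : Y →L[ℝ] ℝ) < r := by
      rw [dist_zero_right]; calc ‖y‖ ≤ ρ := hy
        _ < r := by rw [hρdef]; linarith
    have hb := hball hlt
    simp only [Real.norm_eq_abs] at hb
    have h1 : (xs + y) x ≤ ‖xs + y‖ := by
      calc (xs + y) x ≤ ‖(xs + y) x‖ := le_abs_self _
        _ ≤ ‖xs + y‖ * ‖x‖ := ContinuousLinearMap.le_opNorm _ _
        _ ≤ ‖xs + y‖ * 1 := by
            exact mul_le_mul_of_nonneg_left hx (norm_nonneg _)
        _ = ‖xs + y‖ := mul_one _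
    have hTy : T y = y x - d y := by
      simp only [hT, ContinuousLinearMap.sub_apply]
      congr 1
    have h2 : y x ≤ ‖xs + y‖ - xs x := by
      have : xs x + y x ≤ ‖xs + y‖ := by
        simpa [ContinuousLinearMap.add_apply] using h1
      linarith
    have h3 : ‖xs + y‖ - ‖xs‖ - d y ≤ ε * ‖y‖ := by
      have := abs_le.1 hb; linarith [this.2]
    have h4 : ε * ‖y‖ ≤ ε * ρ := mul_le_mul_of_nonneg_left hy hε.le
    rw [hTy]
    calc y x - d y ≤ (‖xs + y‖ - xs x) - d y := by linarith
      _ = (‖xs + y‖ - ‖xs‖ - d y) + (‖xs‖ - xs x) := by ring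
      _ ≤ ε * ρ + ε * ρ := by linarith
  have key2 : ∀ y : Y →L[ℝ] ℝ, ‖y‖ ≤ ρ → |T y| ≤ 2 * ε * ρ := by
    intro y hy
    rw [abs_le]
    constructor
    · have := key (-y) (by simpa using hy)
      simp only [map_neg] at this; linarith
    · have := key y hy; linarith
  refine ContinuousLinearMap.opNorm_le_of_shell (ε := ρ) (c := (2:ℝ)) hρ
    (by positivity) (by rw [Real.norm_ofNat 2]; norm_num) ?_
  intro z hz1 hz2
  have h2 : ‖(2:ℝ)‖ = 2 := Real.norm_ofNat 2
  rw [h2] at hz1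
  have hzρ : ρ ≤ 2 * ‖z‖ := by rw [div_le_iff₀ (by norm_num : (0:ℝ) < 2)] at hz1; linarith
  calc ‖T z‖ = |T z| := rfl
    _ ≤ 2 * ε * ρ := key2 z hz2.le
    _ ≤ 2 * ε * (2 * ‖z‖) := by
        exact mul_le_mul_of_nonneg_left hzρ (by positivity)
    _ = 4 * ε * ‖z‖ := by ring

lemma smulyan_d_le {Y : Type*} [NormedAddCommGroup Y] [NormedSpace ℝ Y]
    {xs : Y →L[ℝ] ℝ} {d : (Y →L[ℝ] ℝ) →L[ℝ] ℝ}
    (hd : HasFDerivAt (fun f : Y →L[ℝ] ℝ => ‖f‖) d xs) (z : Y →L[ℝ] ℝ) :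
    d z ≤ ‖z‖ := by
  rcases eq_or_ne z 0 with rfl | hz
  · simp
  have hzn : 0 < ‖z‖ := norm_pos_iff.2 hz
  -- show d z ≤ (1+ε)‖z‖ for all ε > 0
  by_contra hcon
  push_neg at hcon
  set ε := (d z - ‖z‖) / (2 * ‖z‖) with hεdef
  have hε : 0 < ε := by apply div_pos; linarith; positivity
  have hlo := (hasFDerivAt_iff_isLittleO_nhds_zero.1 hd).def hε
  rw [Metric.eventually_nhds_iff] at hlo
  obtain ⟨r, hr, hball⟩ := hlo
  set t : ℝ := r / (2 * ‖z‖) with htdef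
  have ht : 0 < t := by positivity
  have hsm : ‖t • z‖ = t * ‖z‖ := by
    have h := norm_smul t z
    rw [Real.norm_eq_abs, abs_of_pos ht] at h; exact h
  have hlt : dist (t • z) (0 : Y →L[ℝ] ℝ) < r := by
    rw [dist_zero_right, hsm, htdef]
    rw [div_mul_eq_mul_div, mul_comm]
    rw [div_lt_iff₀ (by positivity : (0:ℝ) < 2 * ‖z‖)]
    nlinarith
  have hb := hball hlt
  rw [hsm] at hb
  have h1 : ‖xs + t • z‖ - ‖xs‖ ≤ t * ‖z‖ := by
    have := norm_add_le xs (t • z)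
    rw [hsm] at this; linarith
  have h2 : d (t • z) = t * d z := by rw [map_smul]; rfl
  rw [h2, Real.norm_eq_abs] at hb
  have h3 := (abs_le.1 hb).1
  -- -(ε t ‖z‖) ≤ ‖xs + t z‖ - ‖xs‖ - t d z ≤ t‖z‖ - t d z
  have h4 : t * d z ≤ t * ‖z‖ + ε * (t * ‖z‖) := by linarith
  have h5 : d z ≤ ‖z‖ + ε * ‖z‖ := by
    have := (mul_le_mul_iff_right₀ ht).1 (by linarith [h4] : t * d z ≤ t * (‖z‖ + ε * ‖z‖))
    linarith
  rw [hεdef] at h5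
  have : (d z - ‖z‖) / (2 * ‖z‖) * ‖z‖ = (d z - ‖z‖) / 2 := by field_simp
  rw [this] at h5
  linarith

lemma smulyan_d_self {Y : Type*} [NormedAddCommGroup Y] [NormedSpace ℝ Y]
    {xs : Y →L[ℝ] ℝ} {d : (Y →L[ℝ] ℝ) →L[ℝ] ℝ}
    (hd : HasFDerivAt (fun f : Y →L[ℝ] ℝ => ‖f‖) d xs) :
    d xs = ‖xs‖ := by
  rcases eq_or_ne xs 0 with rfl | hxs
  · -- degenerate case: norm not differentiable at 0 unless Y trivial; but then
    -- we can still argue: d 0 = 0 = ‖0‖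
    simp
  have hxn : 0 < ‖xs‖ := norm_pos_iff.2 hxs
  have key : ∀ ε : ℝ, 0 < ε → |‖xs‖ - d xs| ≤ ε * ‖xs‖ := by
    intro ε hε
    have hlo := (hasFDerivAt_iff_isLittleO_nhds_zero.1 hd).def hε
    rw [Metric.eventually_nhds_iff] at hlo
    obtain ⟨r, hr, hball⟩ := hlo
    set t : ℝ := r / (2 * ‖xs‖) with htdef
    have ht : 0 < t := by positivity
    have hsm : ‖t • xs‖ = t * ‖xs‖ := by
      have h := norm_smul t xs
      rw [Real.norm_eq_abs, abs_of_pos ht] at h; exact h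
    have hlt : dist (t • xs) (0 : Y →L[ℝ] ℝ) < r := by
      rw [dist_zero_right, hsm, htdef, div_mul_eq_mul_div, mul_comm]
      rw [div_lt_iff₀ (by positivity : (0:ℝ) < 2 * ‖xs‖)]
      nlinarith
    have hb := hball hlt
    rw [hsm] at hb
    have h1 : ‖xs + t • xs‖ = (1 + t) * ‖xs‖ := by
      have : xs + t • xs = (1 + t) • xs := by rw [add_smul, one_smul]
      have h := norm_smul (1 + t) xs
      rw [Real.norm_eq_abs, abs_of_pos (by linarith : (0:ℝ) < 1 + t)] at h
      rw [this]; exact h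
    have h2 : d (t • xs) = t * d xs := by rw [map_smul]; rfl
    rw [h1, h2, Real.norm_eq_abs] at hb
    have h3 : (1 + t) * ‖xs‖ - ‖xs‖ - t * d xs = t * (‖xs‖ - d xs) := by ring
    rw [h3, abs_mul, abs_of_pos ht,
      show ε * (t * ‖xs‖) = t * (ε * ‖xs‖) by ring] at hb
    exact (mul_le_mul_iff_right₀ ht).1 hb
  by_contra hcon
  have habs : 0 < |‖xs‖ - d xs| := by
    rw [abs_pos]; intro h; apply hcon; linarith [sub_eq_zero.1 h]
  have := key (|‖xs‖ - d xs| / (2 * ‖xs‖)) (by positivity)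
  rw [div_mul_eq_mul_div, mul_comm] at this
  have h6 : ‖xs‖ * |‖xs‖ - d xs| / (2 * ‖xs‖) = |‖xs‖ - d xs| / 2 := by
    field_simp
  rw [h6] at this
  linarith

lemma smulyan {Y : Type*} [NormedAddCommGroup Y] [NormedSpace ℝ Y] [CompleteSpace Y]
    {xs : Y →L[ℝ] ℝ} {d : (Y →L[ℝ] ℝ) →L[ℝ] ℝ}
    (hd : HasFDerivAt (fun f : Y →L[ℝ] ℝ => ‖f‖) d xs) (hxs : xs ≠ 0) :
    (∃ y : Y, ‖y‖ = 1 ∧ xs y = ‖xs‖ ∧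
        (inclusionInDoubleDualLi ℝ y : (Y →L[ℝ] ℝ) →L[ℝ] ℝ) = d) ∧
    (∀ x : Y, ‖x‖ ≤ 1 → xs x = ‖xs‖ →
        (inclusionInDoubleDualLi ℝ x : (Y →L[ℝ] ℝ) →L[ℝ] ℝ) = d) := by
  have hxn : 0 < ‖xs‖ := norm_pos_iff.2 hxs
  have exact_case : ∀ x : Y, ‖x‖ ≤ 1 → xs x = ‖xs‖ →
      (inclusionInDoubleDualLi ℝ x : (Y →L[ℝ] ℝ) →L[ℝ] ℝ) = d := by
    intro x hx1 hx2
    have hle : ∀ ε : ℝ, 0 < ε →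
        ‖(inclusionInDoubleDualLi ℝ x : (Y →L[ℝ] ℝ) →L[ℝ] ℝ) - d‖ ≤ 4 * ε := by
      intro ε hε
      obtain ⟨δ, hδ, hest⟩ := smulyan_est hd hε
      exact hest x hx1 (by rw [hx2]; simp; linarith)
    have h0 : ‖(inclusionInDoubleDualLi ℝ x : (Y →L[ℝ] ℝ) →L[ℝ] ℝ) - d‖ ≤ 0 := by
      by_contra hcon
      push_neg at hcon
      have := hle (‖(inclusionInDoubleDualLi ℝ x : (Y →L[ℝ] ℝ) →L[ℝ] ℝ) - d‖ / 8)
        (by positivity)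
      linarith
    rw [← sub_eq_zero]
    exact (norm_le_zero_iff (E := (Y →L[ℝ] ℝ) →L[ℝ] ℝ)).1 h0
  refine ⟨?_, exact_case⟩
  -- existence: d is in the closure of the range of the double dual embedding
  have hclosed : IsClosed (Set.range (inclusionInDoubleDualLi ℝ (E := Y))) := by
    have h : Isometry (inclusionInDoubleDualLi ℝ (E := Y)) :=
      (inclusionInDoubleDualLi ℝ (E := Y)).isometry
    exact h.isClosedEmbedding.isClosed_range
  have hmem : d ∈ closure (Set.range (inclusionInDoubleDualLi ℝ (E := Y))) := by
    refine (Metric.mem_closure_iff (α := (Y →L[ℝ] ℝ) →L[ℝ] ℝ)).mpr ?_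
    intro ε hε
    obtain ⟨δ, hδ, hest⟩ := smulyan_est hd (show (0:ℝ) < ε / 8 by positivity)
    set δ' : ℝ := min δ ‖xs‖ with hδ'def
    have hδ' : 0 < δ' := lt_min hδ hxn
    have hlt : ‖xs‖ - δ' < ‖xs‖ := by linarith
    obtain ⟨x, hx1, hx2⟩ := ContinuousLinearMap.exists_lt_apply_of_lt_opNorm xs hlt
    -- make the value positive by flipping sign if necessary
    have hr0 : 0 ≤ ‖xs‖ - δ' := by
      have : δ' ≤ ‖xs‖ := min_le_right _ _
      linarith
    obtain ⟨x', hx'1, hx'2⟩ : ∃ x' : Y, ‖x'‖ ≤ 1 ∧ ‖xs‖ - δ' < xs x' := by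
      rcases le_or_gt 0 (xs x) with h | h
      · exact ⟨x, hx1.le, by rwa [Real.norm_eq_abs, abs_of_nonneg h] at hx2⟩
      · refine ⟨-x, by simpa using hx1.le, ?_⟩
        rw [map_neg]
        rwa [Real.norm_eq_abs, abs_of_neg h] at hx2
    have := hest x' hx'1 (by
      have : δ' ≤ δ := min_le_left _ _
      linarith)
    refine ⟨inclusionInDoubleDualLi ℝ x', Set.mem_range_self _, ?_⟩
    rw [dist_eq_norm (E := (Y →L[ℝ] ℝ) →L[ℝ] ℝ), norm_sub_rev (E := (Y →L[ℝ] ℝ) →L[ℝ] ℝ)]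
    calc ‖(inclusionInDoubleDualLi ℝ x' : (Y →L[ℝ] ℝ) →L[ℝ] ℝ) - d‖ ≤ 4 * (ε / 8) := this
      _ < ε := by linarith
  rw [hclosed.closure_eq] at hmem
  obtain ⟨y, hy⟩ := hmem
  have hyxs : xs y = ‖xs‖ := by
    have h1 : (inclusionInDoubleDualLi ℝ y : (Y →L[ℝ] ℝ) →L[ℝ] ℝ) xs = xs y := rfl
    rw [← h1, hy, smulyan_d_self hd]
  have hdnorm : ‖d‖ ≤ 1 := by
    refine ContinuousLinearMap.opNorm_le_bound d zero_le_one ?_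
    intro z
    rw [one_mul, Real.norm_eq_abs, abs_le]
    constructor
    · have := smulyan_d_le hd (-z)
      rw [map_neg] at this
      simp only [norm_neg] at this
      linarith
    · exact smulyan_d_le hd z
  have hy1 : ‖y‖ = 1 := by
    have heq : ‖y‖ = ‖d‖ := by
      rw [← hy]; exact ((inclusionInDoubleDualLi ℝ (E := Y)).norm_map y).symm
    have hge : 1 ≤ ‖y‖ := by
      have h2 : ‖xs‖ = xs y := hyxs.symm
      have h3 : xs y ≤ ‖xs‖ * ‖y‖ := by
        calc xs y ≤ |xs y| := le_abs_self _
          _ ≤ ‖xs‖ * ‖y‖ := ContinuousLinearMap.le_opNorm xs y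
      nlinarith
    rw [heq] at hge ⊢
    linarith
  exact ⟨y, hy1, hyxs, hy⟩

lemma symm_slope {φ : ℝ → ℝ} (h : DifferentiableAt ℝ φ 0) :
    Filter.Tendsto (fun t => (φ t + φ (-t) - 2 * φ 0) / t) (𝓝[≠] (0:ℝ)) (𝓝 0) := by
  have hd : HasDerivAt φ (deriv φ 0) 0 := h.hasDerivAt
  have h1 : Filter.Tendsto (slope φ 0) (𝓝[≠] (0:ℝ)) (𝓝 (deriv φ 0)) :=
    hasDerivAt_iff_tendsto_slope.1 hd
  have hneg : Filter.Tendsto (fun t : ℝ => -t) (𝓝[≠] (0:ℝ)) (𝓝[≠] (0:ℝ)) := by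
    rw [tendsto_nhdsWithin_iff]
    constructor
    · have : Filter.Tendsto (fun t : ℝ => -t) (𝓝 (0:ℝ)) (𝓝 (-0 : ℝ)) :=
        (continuous_neg.tendsto 0)
      rw [neg_zero] at this
      exact this.mono_left nhdsWithin_le_nhds
    · filter_upwards [eventually_mem_nhdsWithin] with t ht
      simp only [Set.mem_compl_iff, Set.mem_singleton_iff] at ht ⊢
      exact neg_ne_zero.2 ht
  have h2 : Filter.Tendsto (fun t => slope φ 0 (-t)) (𝓝[≠] (0:ℝ)) (𝓝 (deriv φ 0)) :=
    h1.comp hneg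
  have h3 := h1.sub h2
  rw [sub_self] at h3
  refine h3.congr' ?_
  filter_upwards [eventually_mem_nhdsWithin] with t ht
  simp only [Set.mem_compl_iff, Set.mem_singleton_iff] at ht
  rw [slope_def_field, slope_def_field, div_sub_div _ _ (sub_ne_zero.2 ht) (by simpa using ht)]
  field_simp
  simp only [sub_zero]
  field_simp
  ring

set_option maxHeartbeats 1000000 in
/-- If the dual norm of `Y` is `C²`-smooth away from the origin,
`A : Y → Y`, `B : Z → Y` are bounded linear operators, and `(y₀, y₀*) ∈ Π(Y)` satisfies
`|y*(A y)| + ‖B* y*‖ ≤ |y₀*(A y₀)| + ‖B* y₀*‖` for all `(y, y*) ∈ Π(Y)`, then for every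
`h*` in the unit sphere of `Y*`, `lim_{t→0} (‖B* y₀* + t B* h*‖ + ‖B* y₀* − t B* h*‖
 − 2 ‖B* y₀*‖)/t = 0`. -/
theorem lemma_on_Y
    {Y : Type*} [NormedAddCommGroup Y] [NormedSpace ℝ Y] [CompleteSpace Y]
    {Z : Type*} [NormedAddCommGroup Z] [NormedSpace ℝ Z] [CompleteSpace Z]
    (hsmooth : ContDiffOn ℝ 2 (fun f : Y →L[ℝ] ℝ => ‖f‖) {0}ᶜ)
    (A : Y →L[ℝ] Y) (B : Z →L[ℝ] Y)
    (y₀ : Y) (y₀star : Y →L[ℝ] ℝ) (hy₀ : ‖y₀‖ = 1) (hy₀star : ‖y₀star‖ = 1)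
    (hy₀pair : y₀star y₀ = 1)
    (hmax : ∀ (y : Y) (ystar : Y →L[ℝ] ℝ), ‖y‖ = 1 → ‖ystar‖ = 1 → ystar y = 1 →
      |ystar (A y)| + ‖ystar ∘L B‖ ≤ |y₀star (A y₀)| + ‖y₀star ∘L B‖) :
    ∀ hstar : Y →L[ℝ] ℝ, ‖hstar‖ = 1 →
      Tendsto
        (fun t : ℝ =>
          (‖y₀star ∘L B + t • (hstar ∘L B)‖ + ‖y₀star ∘L B - t • (hstar ∘L B)‖
            - 2 * ‖y₀star ∘L B‖) / t)
        (𝓝[≠] (0 : ℝ)) (𝓝 0) := by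
  intro hstar hhs
  set g : Z →L[ℝ] ℝ := y₀star ∘L B with hgdef
  set f : Z →L[ℝ] ℝ := hstar ∘L B with hfdef
  set Nm : (Y →L[ℝ] ℝ) → ℝ := fun x => ‖x‖ with hNmdef
  have hCA : ∀ x : Y →L[ℝ] ℝ, x ≠ 0 → ContDiffAt ℝ 2 Nm x := fun x hx =>
    hsmooth.contDiffAt (isOpen_compl_singleton.mem_nhds hx)
  set G := fderiv ℝ Nm with hGdef
  have hG1 : ∀ x : Y →L[ℝ] ℝ, x ≠ 0 → ContDiffAt ℝ 1 G x := fun x hx =>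
    (hCA x hx).fderiv_right (by norm_num)
  have hfd : ∀ x : Y →L[ℝ] ℝ, x ≠ 0 → HasFDerivAt Nm (G x) x := fun x hx =>
    ((hCA x hx).differentiableAt (by norm_num)).hasFDerivAt
  set c : ℝ → (Y →L[ℝ] ℝ) := fun t => y₀star + t • hstar with hcdef
  have hc0 : c 0 = y₀star := by simp [hcdef]
  have hy₀ne : y₀star ≠ 0 := by
    intro h; rw [h] at hy₀star; simp at hy₀star
  have hclow : ∀ t : ℝ, |t| < 1 → 1 - |t| ≤ ‖c t‖ := by
    intro t ht
    have h1 : ‖(y₀star : Y →L[ℝ] ℝ)‖ - ‖t • hstar‖ ≤ ‖y₀star + t • hstar‖ := by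
      have h0 : ‖(y₀star : Y →L[ℝ] ℝ)‖ ≤ ‖y₀star + t • hstar‖ + ‖t • hstar‖ := by
        calc ‖(y₀star : Y →L[ℝ] ℝ)‖ = ‖(y₀star + t • hstar) - t • hstar‖ := by
              rw [add_sub_cancel_right]
          _ ≤ ‖y₀star + t • hstar‖ + ‖t • hstar‖ := norm_sub_le _ _
      linarith
    have h2 : ‖t • hstar‖ = |t| := by
      have h := norm_smul t hstar
      rw [Real.norm_eq_abs, hhs, mul_one] at h; exact h
    rw [hy₀star] at h1; rw [hcdef]; rw [h2] at h1; exact h1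
  have hcne : ∀ t : ℝ, |t| < 1 → c t ≠ 0 := by
    intro t ht h0
    have := hclow t ht
    rw [h0, norm_zero] at this; linarith
  set n : ℝ → ℝ := fun t => ‖c t‖ with hndef
  set a : ℝ → ℝ := fun t => (G (c t)) ((y₀star ∘L A) + t • (hstar ∘L A)) with hadef
  have hcompA : ∀ t : ℝ, (c t) ∘L A = (y₀star ∘L A) + t • (hstar ∘L A) := by
    intro t
    rw [hcdef]
    rw [ContinuousLinearMap.add_comp, ContinuousLinearMap.smul_comp]
  have hcompB : ∀ t : ℝ, (c t) ∘L B = g + t • f := by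
    intro t
    rw [hcdef]
    rw [ContinuousLinearMap.add_comp, ContinuousLinearMap.smul_comp]
  -- differentiability of t ↦ c t, n, a at 0
  have hcdiff : DifferentiableAt ℝ c 0 := by
    apply DifferentiableAt.add
    · exact differentiableAt_const _
    · exact (differentiableAt_id).smul_const hstar
  have hGd : DifferentiableAt ℝ G (c 0) := by
    rw [hc0]; exact (hG1 y₀star hy₀ne).differentiableAt (by norm_num)
  have hΓ : DifferentiableAt ℝ (fun t => G (c t)) 0 := DifferentiableAt.comp (g := G) 0 hGd hcdiff
  have hadiff : DifferentiableAt ℝ a 0 := by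
    apply DifferentiableAt.clm_apply hΓ
    apply DifferentiableAt.add
    · exact differentiableAt_const _
    · exact (differentiableAt_id).smul_const (hstar ∘L A)
  have hNmd : DifferentiableAt ℝ Nm (c 0) := by
    rw [hc0]
    exact ((hCA y₀star hy₀ne).differentiableAt (by norm_num))
  have hndiff : DifferentiableAt ℝ n 0 := hNmd.comp 0 hcdiff
  have hn0 : n 0 = 1 := by rw [hndef]; simp only [hc0]; exact hy₀star
  -- identify a 0
  have huniq := (smulyan (hfd y₀star hy₀ne) hy₀ne).2 y₀ (le_of_eq hy₀)
    (by rw [hy₀pair, hy₀star])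
  have ha0 : a 0 = y₀star (A y₀) := by
    have e1 : a 0 = (G y₀star) (y₀star ∘L A) := by
      rw [hadef]; simp only [hc0, zero_smul, add_zero]
    rw [e1, ← huniq]
    rfl
  set M : ℝ := |y₀star (A y₀)| + ‖g‖ with hMdef
  have hM0 : 0 ≤ M := by positivity
  have hgM : ‖g‖ = M - |a 0| := by rw [hMdef, ha0]; ring
  -- the key inequality from maximality
  have key : ∀ t : ℝ, |t| < 1 → |a t| + ‖g + t • f‖ ≤ n t * M := by
    intro t ht
    have hct := hcne t ht
    have hnt : 0 < n t := by
      have := hclow t ht; rw [hndef]; dsimp only; linarith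
    obtain ⟨y, hy1, hy2, hy3⟩ := (smulyan (hfd (c t) hct) hct).1
    set u : Y →L[ℝ] ℝ := (n t)⁻¹ • c t with hudef
    have hinv : 0 < (n t)⁻¹ := inv_pos.2 hnt
    have hu1 : ‖u‖ = 1 := by
      rw [hudef]
      have h := norm_smul ((n t)⁻¹) (c t)
      rw [Real.norm_eq_abs, abs_of_pos hinv] at h
      rw [h]
      exact inv_mul_cancel₀ hnt.ne'
    have hu2 : u y = 1 := by
      rw [hudef, ContinuousLinearMap.smul_apply, smul_eq_mul, hy2]
      exact inv_mul_cancel₀ hnt.ne'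
    have hmm := hmax y u hy1 hu1 hu2
    have hat : a t = (c t) (A y) := by
      rw [hadef]
      dsimp only
      rw [← hy3]
      show ((y₀star ∘L A) + t • (hstar ∘L A)) y = (c t) (A y)
      rw [← hcompA t]
      rfl
    have huAy : u (A y) = (n t)⁻¹ * a t := by
      rw [hudef, ContinuousLinearMap.smul_apply, smul_eq_mul, hat]
    have huB : ‖u ∘L B‖ = (n t)⁻¹ * ‖g + t • f‖ := by
      rw [hudef, ContinuousLinearMap.smul_comp, hcompB t]
      have h := norm_smul ((n t)⁻¹) (g + t • f)
      rw [Real.norm_eq_abs, abs_of_pos hinv] at h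
      exact h
    rw [huAy, huB, abs_mul, abs_of_pos hinv] at hmm
    have h' : (n t)⁻¹ * (|a t| + ‖g + t • f‖) ≤ M := by
      rw [mul_add]; exact hmm
    calc |a t| + ‖g + t • f‖ = n t * ((n t)⁻¹ * (|a t| + ‖g + t • f‖)) := by
          field_simp
      _ ≤ n t * M := mul_le_mul_of_nonneg_left h' hnt.le
  -- limits of the symmetric quotients
  have T1 : Tendsto (fun t => (n t + n (-t) - 2) / t) (𝓝[≠] (0:ℝ)) (𝓝 0) := by
    have := symm_slope hndiff
    rw [hn0] at this
    simpa using this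
  have T2 : Tendsto (fun t => (a t + a (-t) - 2 * a 0) / t) (𝓝[≠] (0:ℝ)) (𝓝 0) :=
    symm_slope hadiff
  -- assemble the squeeze
  set gb : ℝ → ℝ := fun t => |(n t + n (-t) - 2) / t| * M + |(a t + a (-t) - 2 * a 0) / t|
    with hgbdef
  have TB : Tendsto gb (𝓝[≠] (0:ℝ)) (𝓝 0) := by
    have h := (T1.abs.mul_const M).add T2.abs
    simpa using h
  apply squeeze_zero_norm' ?_ TB
  have hev : ∀ᶠ t : ℝ in 𝓝[≠] (0:ℝ), |t| < 1 := by
    apply Filter.Eventually.filter_mono nhdsWithin_le_nhds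
    rw [Metric.eventually_nhds_iff]
    exact ⟨1, one_pos, fun y hy => by simpa [Real.dist_eq] using hy⟩
  filter_upwards [hev, eventually_mem_nhdsWithin] with t ht1 ht0'
  have ht0 : t ≠ 0 := ht0'
  have hs : 0 < |t| := abs_pos.2 ht0
  have htneg : |(-t : ℝ)| < 1 := by rwa [abs_neg]
  have k1 := key t ht1
  have k2 := key (-t) htneg
  have hsub : g + (-t) • f = g - t • f := by rw [neg_smul (M := Z →L[ℝ] ℝ), ← sub_eq_add_neg]
  rw [hsub] at k2
  set Nt : ℝ := ‖g + t • f‖ + ‖g - t • f‖ - 2 * ‖g‖ with hNtdef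
  have hN0 : 0 ≤ Nt := by
    have e1 : g + g = (g + t • f) + (g - t • f) := by abel
    have e2 : ‖g + g‖ = 2 * ‖g‖ := by
      rw [← two_smul ℝ g]
      have h := norm_smul (2:ℝ) g
      rw [Real.norm_eq_abs] at h
      rw [h]; norm_num
    have e3 : ‖g + g‖ ≤ ‖g + t • f‖ + ‖g - t • f‖ := by
      rw [e1]; exact norm_add_le _ _
    rw [hNtdef]; rw [e2] at e3; linarith
  have hn2 : 0 ≤ n t + n (-t) - 2 := by
    have e1 : c t + c (-t) = y₀star + y₀star := by
      rw [hcdef]; dsimp only; rw [neg_smul (M := Y →L[ℝ] ℝ)]; abel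
    have e2 : ‖(y₀star : Y →L[ℝ] ℝ) + y₀star‖ = 2 := by
      rw [← two_smul ℝ (y₀star : Y →L[ℝ] ℝ)]
      have h := norm_smul (2:ℝ) (y₀star : Y →L[ℝ] ℝ)
      rw [Real.norm_eq_abs, hy₀star, mul_one] at h
      rw [h]; norm_num
    have e3 : ‖c t + c (-t)‖ ≤ n t + n (-t) := norm_add_le _ _
    rw [e1, e2] at e3
    linarith
  have habs : 2 * |a 0| - |a t + a (-t) - 2 * a 0| ≤ |a t| + |a (-t)| := by
    have h6 : |a t + a (-t)| ≤ |a t| + |a (-t)| := abs_add_le _ _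
    have h7 : |2 * a 0| - |a t + a (-t)| ≤ |a t + a (-t) - 2 * a 0| := by
      have h8 := abs_sub_abs_le_abs_sub (2 * a 0) (a t + a (-t))
      rwa [abs_sub_comm] at h8
    have h9 : |2 * a 0| = 2 * |a 0| := by rw [abs_mul]; norm_num
    linarith
  have hNle : Nt ≤ (n t + n (-t) - 2) * M + |a t + a (-t) - 2 * a 0| := by
    have := hgM
    nlinarith [k1, k2, habs, hM0]
  show ‖Nt / t‖ ≤ gb t
  rw [Real.norm_eq_abs, abs_div, abs_of_nonneg hN0, hgbdef]
  dsimp only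
  rw [abs_div, abs_div, abs_of_nonneg hn2]
  calc Nt / |t| ≤ ((n t + n (-t) - 2) * M + |a t + a (-t) - 2 * a 0|) / |t| := by
        gcongr
    _ = (n t + n (-t) - 2) / |t| * M + |a t + a (-t) - 2 * a 0| / |t| := by
        field_simp
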